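/- Let $\phi_\epsilon : \mathbb{R} \to \mathbb{R}$ be defined by $\phi_\epsilon(z) = -\frac{1}{R_0(z)^2}\left[(b+a\omega)\int_{-\infty}^{z} R_0(s)^2\,ds + (d_1-a)\int_{-\infty}^{z} R_0(s)^4\,ds + (d_2-a\alpha)\int_{-\infty}^{z} R_0(s)^6\,ds\right]$. If $\phi_\epsilon$ is bounded on $\mathbb{R}$ (in particular, uniformly bounded as $z \to \infty$), then $\Lambda_2'\,a - \Lambda_2\,b - \Lambda_4\,d_1 - \Lambda_6\,d_2 = 0$. -/

import Mathlib

open MeasureTheory Filter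

private lemma stmt8_hks_aux (β k s ch : ℝ) (hk2 : k^2 = 1-β) (hch : ch^2 = 1+s^2) :
    k^2*s^2 = (1+k*ch)^2 - 2*(1+k*ch) + β := by
  linear_combination (-(k^2))*hch - hk2

private lemma stmt8_alg1 (ω α β k c s ch : ℝ) (hω : ω ≠ 0) (hk2 : k^2 = 1-β) (hc2 : c^2 = 4*ω)
    (hch : ch^2 = 1+s^2) (hβ : β = -(16/3)*α*ω) (hD : (1+k*ch) ≠ 0) :
    (-(4*ω*(k*(s*c))) / (1+k*ch)^2)^2 / (4*(4*ω/(1+k*ch)))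
      = ω*(4*ω/(1+k*ch)) - (1/2)*(4*ω/(1+k*ch))^2 - (α/3)*(4*ω/(1+k*ch))^3 := by
  have h1 : (-(4*ω*(k*(s*c))) / (1+k*ch)^2)^2
      = (16*ω^2*(((1+k*ch)^2 - 2*(1+k*ch) + β))*(4*ω)) / ((1+k*ch)^2)^2 := by
    rw [div_pow]; congr 1
    linear_combination (16*ω^2*(k^2*s^2))*hc2 + (16*ω^2*(4*ω))*(stmt8_hks_aux β k s ch hk2 hch)
  rw [h1]
  set Dz := 1+k*ch with hDz
  subst hβ
  field_simp
  ring

private lemma stmt8_alg2 (ω α β k c s ch : ℝ) (hω : ω ≠ 0) (hk2 : k^2 = 1-β) (hc2 : c^2 = 4*ω)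
    (hch : ch^2 = 1+s^2) (hβ : β = -(16/3)*α*ω) (hD : (1+k*ch) ≠ 0) :
    (-(2*ω*k*c*(ch*c)) * ((1+k*ch)^2) - (-(2*ω*k*c*s)) * (2*(1+k*ch)^1*(k*(s*c)))) / ((1+k*ch)^2)^2
      = 2*ω*(4*ω/(1+k*ch)) - (3/2)*(4*ω/(1+k*ch))^2 - (4/3)*α*(4*ω/(1+k*ch))^3 := by
  have h1 : (-(2*ω*k*c*(ch*c)) * ((1+k*ch)^2) - (-(2*ω*k*c*s)) * (2*(1+k*ch)^1*(k*(s*c))))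
      = -8*ω^2*((1+k*ch)-1)*(1+k*ch)^2 + 16*ω^2*((1+k*ch)^2 - 2*(1+k*ch) + β)*(1+k*ch) := by
    linear_combination (-2*ω*(k*ch)*(1+k*ch)^2 + 4*ω*(k^2*s^2)*(1+k*ch))*hc2
      + (16*ω^2*(1+k*ch))*(stmt8_hks_aux β k s ch hk2 hch)
  rw [h1]
  set Dz := 1+k*ch with hDz
  subst hβ
  field_simp
  ring

private lemma stmt8_sq_le_sinh_sq (y : ℝ) : y^2 ≤ Real.sinh y ^ 2 := by
  rcases le_total 0 y with h | h
  · have := Real.self_le_sinh_iff.mpr h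
    nlinarith
  · have h2 : Real.sinh y ≤ y := by
      have := Real.self_le_sinh_iff.mpr (neg_nonneg.mpr h)
      rw [Real.sinh_neg] at this; linarith
    nlinarith

private lemma stmt8_cosh_quad (x : ℝ) : 1 + x^2/2 ≤ Real.cosh x := by
  have h1 : Real.cosh x = 1 + 2 * Real.sinh (x/2)^2 := by
    have := Real.cosh_two_mul (x/2)
    have h2 := Real.cosh_sq' (x/2)
    rw [show 2*(x/2) = x by ring] at this
    linarith
  have := stmt8_sq_le_sinh_sq (x/2)
  nlinarith

private lemma stmt8_tendsto_invsq_atTop :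
    Tendsto (fun z:ℝ => (1+z^2)⁻¹) atTop (nhds 0) := by
  have h : Tendsto (fun z:ℝ => 1+z^2) atTop atTop :=
    tendsto_atTop_add_const_left atTop 1 (tendsto_pow_atTop (by norm_num : 2 ≠ 0))
  exact tendsto_inv_atTop_zero.comp h

private lemma stmt8_tendsto_invsq_atBot :
    Tendsto (fun z:ℝ => (1+z^2)⁻¹) atBot (nhds 0) := by
  have h2 : Tendsto (fun z:ℝ => z^2) atBot atTop := by
    have := (tendsto_pow_atTop (α := ℝ) (n := 2) (by norm_num)).comp tendsto_abs_atBot_atTop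
    simpa only [Function.comp_def, sq_abs] using this
  have h : Tendsto (fun z:ℝ => 1+z^2) atBot atTop :=
    tendsto_atTop_add_const_left atBot 1 h2
  exact tendsto_inv_atTop_zero.comp h

/-- With `φ_ε` as in Statement 6, if `φ_ε` is bounded on `ℝ`, then
`Λ₂' a - Λ₂ b - Λ₄ d₁ - Λ₆ d₂ = 0` (a necessary condition for existence of the
bright solitary wave). -/
theorem stmt8 (ω α β a b d1 d2 : ℝ) (hω : 0 < ω) (hβ : β = -(16 / 3) * α * ω)
    (hβ0 : 0 ≤ β) (hβ1 : β < 1)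
    (R0 : ℝ → ℝ)
    (hR0 : ∀ z : ℝ, R0 z =
      Real.sqrt (4 * ω / (1 + Real.sqrt (1 - β) * Real.cosh (2 * Real.sqrt ω * z))))
    (φε : ℝ → ℝ)
    (hφε : ∀ z : ℝ, φε z = -(1 / (R0 z) ^ 2) *
      ((b + a * ω) * (∫ s in Set.Iic z, (R0 s) ^ 2)
        + (d1 - a) * (∫ s in Set.Iic z, (R0 s) ^ 4)
        + (d2 - a * α) * ∫ s in Set.Iic z, (R0 s) ^ 6))
    (hbdd : ∃ C : ℝ, ∀ z : ℝ, |φε z| ≤ C) :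
    (∫ s : ℝ, (deriv R0 s) ^ 2) * a - (∫ s : ℝ, (R0 s) ^ 2) * b
      - (∫ s : ℝ, (R0 s) ^ 4) * d1 - (∫ s : ℝ, (R0 s) ^ 6) * d2 = 0 := by
  obtain ⟨C0, hC0⟩ := hbdd
  set k := Real.sqrt (1 - β) with hkdef
  set c := 2 * Real.sqrt ω with hcdef
  have hk0 : 0 < k := Real.sqrt_pos.mpr (by linarith)
  have hk2 : k^2 = 1 - β := Real.sq_sqrt (by linarith)
  have hc0 : 0 < c := mul_pos two_pos (Real.sqrt_pos.mpr hω)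
  have hc2 : c^2 = 4*ω := by rw [hcdef, mul_pow, Real.sq_sqrt hω.le]; ring
  have hDpos : ∀ z : ℝ, 0 < 1 + k * Real.cosh (c*z) := by
    intro z
    have h1 := Real.cosh_pos (c*z)
    nlinarith
  have hDne : ∀ z : ℝ, (1 + k * Real.cosh (c*z)) ≠ 0 := fun z => (hDpos z).ne'
  have hD1 : ∀ z : ℝ, 1 ≤ 1 + k * Real.cosh (c*z) := by
    intro z
    have h1 := Real.cosh_pos (c*z)
    nlinarith
  have hgpos : ∀ z : ℝ, 0 < 4*ω/(1 + k*Real.cosh (c*z)) :=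
    fun z => div_pos (by linarith) (hDpos z)
  have hR0sq : ∀ z, (R0 z)^2 = 4*ω/(1 + k*Real.cosh (c*z)) := by
    intro z
    rw [hR0 z]
    exact Real.sq_sqrt (hgpos z).le
  have hR0pos : ∀ z, 0 < R0 z := by
    intro z
    rw [hR0 z]
    exact Real.sqrt_pos.mpr (hgpos z)
  set m := min 1 (c^2/2) with hmdef
  have hm0 : 0 < m := lt_min one_pos (by positivity)
  have hDge : ∀ z : ℝ, k*m*(1+z^2) ≤ 1 + k*Real.cosh (c*z) := by
    intro z
    have h1 := stmt8_cosh_quad (c*z)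
    have hm1 : m ≤ 1 := min_le_left _ _
    have hm2 : m ≤ c^2/2 := min_le_right _ _
    have h3 : m*(1+z^2) ≤ 1 + (c*z)^2/2 := by nlinarith [sq_nonneg z, sq_nonneg (c*z)]
    have h4 : m*(1+z^2) ≤ Real.cosh (c*z) := h3.trans h1
    nlinarith
  have hkm : 0 < k*m := mul_pos hk0 hm0
  have hR0sq_le : ∀ z : ℝ, (R0 z)^2 ≤ (4*ω/(k*m)) * (1+z^2)⁻¹ := by
    intro z
    rw [hR0sq z]
    have h1 : 0 < k*m*(1+z^2) := by positivity
    calc 4*ω/(1+k*Real.cosh (c*z)) ≤ 4*ω/(k*m*(1+z^2)) := by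
          gcongr
          exact hDge z
      _ = (4*ω/(k*m)) * (1+z^2)⁻¹ := by
          field_simp
  have hcontD : Continuous (fun z:ℝ => 1 + k*Real.cosh (c*z)) :=
    continuous_const.add (continuous_const.mul
      (Real.continuous_cosh.comp (continuous_const.mul continuous_id)))
  have hcontR0 : Continuous R0 := by
    rw [show R0 = fun z => Real.sqrt (4*ω/(1 + k*Real.cosh (c*z))) from funext hR0]
    exact Real.continuous_sqrt.comp (Continuous.div continuous_const hcontD hDne)
  -- integrability of powers of R0
  have key : ∀ (A : ℝ) (g : ℝ → ℝ), Continuous g → (∀ z, 0 ≤ g z) →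
      (∀ z, g z ≤ A * (1+z^2)⁻¹) → Integrable g := by
    intro A g hg hnn hle
    apply Integrable.mono (integrable_inv_one_add_sq.const_mul A) hg.aestronglyMeasurable
    apply Filter.Eventually.of_forall
    intro z
    rw [Real.norm_eq_abs, Real.norm_eq_abs, abs_of_nonneg (hnn z)]
    exact (hle z).trans (le_abs_self _)
  have hR0le : ∀ z, (R0 z)^2 ≤ 4*ω := by
    intro z
    rw [hR0sq z]
    exact div_le_self (by linarith) (hD1 z)
  have hInt2 : Integrable (fun z => (R0 z)^2) :=
    key (4*ω/(k*m)) _ (hcontR0.pow 2) (fun z => sq_nonneg _) hR0sq_le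
  have hInt4 : Integrable (fun z => (R0 z)^4) := by
    apply key (4*ω*(4*ω/(k*m))) (fun z => (R0 z)^4) (hcontR0.pow 4) (fun z => by positivity)
    intro z
    have h1 : (R0 z)^4 = (R0 z)^2 * (R0 z)^2 := by ring
    rw [h1, mul_assoc]
    exact mul_le_mul (hR0le z) (hR0sq_le z) (sq_nonneg _) (by linarith)
  have hInt6 : Integrable (fun z => (R0 z)^6) := by
    apply key (4*ω*(4*ω*(4*ω/(k*m)))) (fun z => (R0 z)^6) (hcontR0.pow 6) (fun z => by positivity)
    intro z
    have h1 : (R0 z)^6 = (R0 z)^2 * ((R0 z)^2 * (R0 z)^2) := by ring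
    rw [h1, mul_assoc]
    refine mul_le_mul (hR0le z) ?_ (by positivity) (by linarith)
    rw [mul_assoc]
    exact mul_le_mul (hR0le z) (hR0sq_le z) (sq_nonneg _) (by linarith)
  -- derivative of R0
  have hcz : ∀ z : ℝ, HasDerivAt (fun y:ℝ => c*y) c z := by
    intro z
    simpa using (hasDerivAt_id z).const_mul c
  have hDer : ∀ z, HasDerivAt R0
      (-(4*ω*(k*(Real.sinh (c*z)*c))) / (1+k*Real.cosh (c*z))^2
        / (2*Real.sqrt (4*ω/(1+k*Real.cosh (c*z))))) z := by
    intro z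
    have hD' : HasDerivAt (fun y:ℝ => 1+k*Real.cosh (c*y)) (k*(Real.sinh (c*z)*c)) z :=
      (((hcz z).cosh).const_mul k).const_add 1
    have hg : HasDerivAt (fun y:ℝ => 4*ω/(1+k*Real.cosh (c*y)))
        (-(4*ω*(k*(Real.sinh (c*z)*c))) / (1+k*Real.cosh (c*z))^2) z := by
      have h := (hasDerivAt_const z (4*ω)).div hD' (hDne z)
      exact h.congr_deriv (by ring)
    rw [show R0 = fun y => Real.sqrt (4*ω/(1 + k*Real.cosh (c*y))) from funext hR0]
    exact hg.sqrt (hgpos z).ne'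
  have hDerSq : ∀ z, (deriv R0 z)^2
      = ω*(R0 z)^2 - (1/2)*(R0 z)^4 - (α/3)*(R0 z)^6 := by
    intro z
    rw [(hDer z).deriv]
    rw [show (R0 z)^4 = ((R0 z)^2)^2 by ring, show (R0 z)^6 = ((R0 z)^2)^3 by ring, hR0sq z]
    rw [div_pow]
    have hden : (2*Real.sqrt (4*ω/(1+k*Real.cosh (c*z))))^2
        = 4*(4*ω/(1+k*Real.cosh (c*z))) := by
      rw [mul_pow, Real.sq_sqrt (hgpos z).le]
      norm_num
    rw [hden]
    exact stmt8_alg1 ω α β k c (Real.sinh (c*z)) (Real.cosh (c*z)) hω.ne' hk2 hc2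
      (Real.cosh_sq' (c*z)) hβ (hDne z)
  -- the auxiliary function H and its derivative
  set H : ℝ → ℝ := fun z => (-(2*ω*k*c*Real.sinh (c*z)))/(1+k*Real.cosh (c*z))^2 with hHdef
  have hHder : ∀ z, HasDerivAt H
      (2*ω*(R0 z)^2 - (3/2)*(R0 z)^4 - (4/3)*α*(R0 z)^6) z := by
    intro z
    have hD' : HasDerivAt (fun y:ℝ => 1+k*Real.cosh (c*y)) (k*(Real.sinh (c*z)*c)) z :=
      (((hcz z).cosh).const_mul k).const_add 1
    have hDsq : HasDerivAt (fun y:ℝ => (1+k*Real.cosh (c*y))^2)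
        (2*(1+k*Real.cosh (c*z))^1*(k*(Real.sinh (c*z)*c))) z := by
      have h := hD'.pow 2
      exact h.congr_deriv (by push_cast; ring)
    have hN : HasDerivAt (fun y:ℝ => (-(2*ω*k*c*Real.sinh (c*y))))
        (-(2*ω*k*c*(Real.cosh (c*z)*c))) z := (((hcz z).sinh).const_mul (2*ω*k*c)).neg
    have hdiv := hN.div hDsq (pow_ne_zero 2 (hDne z))
    rw [hHdef]
    refine hdiv.congr_deriv ?_
    rw [hR0sq z, show (R0 z)^4 = ((R0 z)^2)^2 by ring,
      show (R0 z)^6 = ((R0 z)^2)^3 by ring, hR0sq z]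
    exact (stmt8_alg2 ω α β k c (Real.sinh (c*z)) (Real.cosh (c*z)) hω.ne' hk2 hc2
      (Real.cosh_sq' (c*z)) hβ (hDne z))
  -- bound on H
  have hHbound : ∀ z : ℝ, ‖H z‖ ≤ (2*ω*c/(k*m)) * (1+z^2)⁻¹ := by
    intro z
    have hchpos := Real.cosh_pos (c*z)
    have hsabs : |Real.sinh (c*z)| ≤ Real.cosh (c*z) := by
      nlinarith [sq_abs (Real.sinh (c*z)), Real.cosh_sq' (c*z), abs_nonneg (Real.sinh (c*z))]
    have h1 : 0 < k*m*(1+z^2) := by positivity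
    have hDz := hDpos z
    have hDkch : k * Real.cosh (c*z) ≤ 1 + k*Real.cosh (c*z) := by linarith
    have hsq : (k*Real.cosh (c*z)) * (k*m*(1+z^2)) ≤ (1 + k*Real.cosh (c*z))^2 := by
      nlinarith [mul_le_mul hDkch (hDge z) h1.le hDz.le]
    rw [hHdef, Real.norm_eq_abs, abs_div, abs_neg]
    have hnum : |2*ω*k*c*Real.sinh (c*z)| ≤ 2*ω*k*c*Real.cosh (c*z) := by
      rw [abs_mul]
      rw [abs_of_nonneg (by positivity : (0:ℝ) ≤ 2*ω*k*c)]
      exact mul_le_mul_of_nonneg_left hsabs (by positivity)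
    have hdenabs : |(1+k*Real.cosh (c*z))^2| = (1+k*Real.cosh (c*z))^2 :=
      abs_of_nonneg (sq_nonneg _)
    rw [hdenabs]
    calc |2*ω*k*c*Real.sinh (c*z)| / (1+k*Real.cosh (c*z))^2
        ≤ (2*ω*k*c*Real.cosh (c*z)) / ((k*Real.cosh (c*z)) * (k*m*(1+z^2))) := by
          apply div_le_div₀ (by positivity) hnum (by positivity) hsq
      _ = (2*ω*c/(k*m)) * (1+z^2)⁻¹ := by
          field_simp
  have hHtend0T : Tendsto (fun z:ℝ => (2*ω*c/(k*m)) * (1+z^2)⁻¹) atTop (nhds 0) := by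
    simpa using stmt8_tendsto_invsq_atTop.const_mul (2*ω*c/(k*m))
  have hHtend0B : Tendsto (fun z:ℝ => (2*ω*c/(k*m)) * (1+z^2)⁻¹) atBot (nhds 0) := by
    simpa using stmt8_tendsto_invsq_atBot.const_mul (2*ω*c/(k*m))
  have hHtop : Tendsto H atTop (nhds 0) := squeeze_zero_norm hHbound hHtend0T
  have hHbot : Tendsto H atBot (nhds 0) := squeeze_zero_norm hHbound hHtend0B
  -- FTC on the whole line for H
  have hIntP : Integrable (fun z => 2*ω*(R0 z)^2 - (3/2)*(R0 z)^4 - (4/3)*α*(R0 z)^6) :=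
    ((hInt2.const_mul (2*ω)).sub (hInt4.const_mul (3/2))).sub (hInt6.const_mul ((4/3)*α))
  have eIoi : (∫ z in Set.Ioi (0:ℝ), (2*ω*(R0 z)^2 - (3/2)*(R0 z)^4 - (4/3)*α*(R0 z)^6))
      = 0 - H 0 :=
    integral_Ioi_of_hasDerivAt_of_tendsto' (fun x _ => hHder x) hIntP.integrableOn hHtop
  have eIic : (∫ z in Set.Iic (0:ℝ), (2*ω*(R0 z)^2 - (3/2)*(R0 z)^4 - (4/3)*α*(R0 z)^6))
      = H 0 - 0 :=
    integral_Iic_of_hasDerivAt_of_tendsto' (fun x _ => hHder x) hIntP.integrableOn hHbot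
  have hPzero : (∫ z:ℝ, (2*ω*(R0 z)^2 - (3/2)*(R0 z)^4 - (4/3)*α*(R0 z)^6)) = 0 := by
    rw [← intervalIntegral.integral_Iic_add_Ioi (b := (0:ℝ)) hIntP.integrableOn
      hIntP.integrableOn, eIic, eIoi]
    ring
  have E1 : 2*ω*(∫ s:ℝ, (R0 s)^2) - (3/2)*(∫ s:ℝ, (R0 s)^4) - (4/3)*α*(∫ s:ℝ, (R0 s)^6) = 0 := by
    have i2 : Integrable (fun z:ℝ => 2*ω*(R0 z)^2) := hInt2.const_mul _
    have i4 : Integrable (fun z:ℝ => (3/2)*(R0 z)^4) := hInt4.const_mul _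
    have i6 : Integrable (fun z:ℝ => (4/3)*α*(R0 z)^6) := hInt6.const_mul _
    have i24 : Integrable (fun z:ℝ => 2*ω*(R0 z)^2 - (3/2)*(R0 z)^4) := i2.sub i4
    rw [← hPzero]
    rw [integral_sub i24 i6, integral_sub i2 i4,
      integral_const_mul, integral_const_mul, integral_const_mul]
  have hId : (∫ s:ℝ, (deriv R0 s)^2)
      = ω*(∫ s:ℝ, (R0 s)^2) - (1/2)*(∫ s:ℝ, (R0 s)^4) - (α/3)*(∫ s:ℝ, (R0 s)^6) := by
    simp_rw [hDerSq]
    have i2 : Integrable (fun z:ℝ => ω*(R0 z)^2) := hInt2.const_mul _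
    have i4 : Integrable (fun z:ℝ => (1/2)*(R0 z)^4) := hInt4.const_mul _
    have i6 : Integrable (fun z:ℝ => (α/3)*(R0 z)^6) := hInt6.const_mul _
    have i24 : Integrable (fun z:ℝ => ω*(R0 z)^2 - (1/2)*(R0 z)^4) := i2.sub i4
    rw [integral_sub i24 i6, integral_sub i2 i4,
      integral_const_mul, integral_const_mul, integral_const_mul]
  -- the boundedness condition forces the Iic-integrals combination to vanish
  set f : ℝ → ℝ := fun z => (b + a*ω)*(R0 z)^2 + (d1 - a)*(R0 z)^4 + (d2 - a*α)*(R0 z)^6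
    with hfdef
  have hIntf : Integrable f := by
    rw [hfdef]
    exact ((hInt2.const_mul _).add (hInt4.const_mul _)).add (hInt6.const_mul _)
  have hsplitIic : ∀ z : ℝ, (∫ s in Set.Iic z, f s)
      = (b + a*ω)*(∫ s in Set.Iic z, (R0 s)^2) + (d1 - a)*(∫ s in Set.Iic z, (R0 s)^4)
        + (d2 - a*α)*(∫ s in Set.Iic z, (R0 s)^6) := by
    intro z
    simp only [hfdef]
    have i2 : IntegrableOn (fun s:ℝ => (b + a*ω)*(R0 s)^2) (Set.Iic z) :=
      hInt2.integrableOn.const_mul _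
    have i4 : IntegrableOn (fun s:ℝ => (d1 - a)*(R0 s)^4) (Set.Iic z) :=
      hInt4.integrableOn.const_mul _
    have i6 : IntegrableOn (fun s:ℝ => (d2 - a*α)*(R0 s)^6) (Set.Iic z) :=
      hInt6.integrableOn.const_mul _
    have i24 : IntegrableOn (fun s:ℝ => (b + a*ω)*(R0 s)^2 + (d1 - a)*(R0 s)^4) (Set.Iic z) :=
      i2.add i4
    rw [integral_add i24 i6, integral_add i2 i4,
      integral_const_mul, integral_const_mul, integral_const_mul]
  have hF : ∀ z : ℝ, (∫ s in Set.Iic z, f s) = -φε z * (R0 z)^2 := by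
    intro z
    have hne : (R0 z)^2 ≠ 0 := pow_ne_zero 2 (hR0pos z).ne'
    have hne' : R0 z ≠ 0 := (hR0pos z).ne'
    rw [hsplitIic z, hφε z]
    field_simp
  have hTend1 : Tendsto (fun z => ∫ s in Set.Iic z, f s) atTop (nhds (∫ s:ℝ, f s)) := by
    have hmono : Monotone (fun z:ℝ => Set.Iic z) := fun i j hij => Set.Iic_subset_Iic.mpr hij
    have h := tendsto_setIntegral_of_monotone (fun z:ℝ => measurableSet_Iic) hmono
      (by rw [Set.iUnion_Iic]; exact hIntf.integrableOn)
    rwa [Set.iUnion_Iic, setIntegral_univ] at h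
  have hTend2 : Tendsto (fun z => ∫ s in Set.Iic z, f s) atTop (nhds 0) := by
    apply squeeze_zero_norm (a := fun z => (max C0 0) * ((4*ω/(k*m)) * (1+z^2)⁻¹))
    · intro z
      rw [hF z, Real.norm_eq_abs, abs_mul, abs_neg]
      have h1 : |φε z| ≤ max C0 0 := (hC0 z).trans (le_max_left _ _)
      have h2 : |(R0 z)^2| ≤ (4*ω/(k*m)) * (1+z^2)⁻¹ := by
        rw [abs_of_nonneg (sq_nonneg _)]
        exact hR0sq_le z
      exact mul_le_mul h1 h2 (abs_nonneg _) (le_max_right _ _)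
    · simpa using (stmt8_tendsto_invsq_atTop.const_mul (4*ω/(k*m))).const_mul (max C0 0)
  have hfzero : (∫ s:ℝ, f s) = 0 := tendsto_nhds_unique hTend1 hTend2
  have E2 : (b + a*ω)*(∫ s:ℝ, (R0 s)^2) + (d1 - a)*(∫ s:ℝ, (R0 s)^4)
      + (d2 - a*α)*(∫ s:ℝ, (R0 s)^6) = 0 := by
    have i2 : Integrable (fun s:ℝ => (b + a*ω)*(R0 s)^2) := hInt2.const_mul _
    have i4 : Integrable (fun s:ℝ => (d1 - a)*(R0 s)^4) := hInt4.const_mul _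
    have i6 : Integrable (fun s:ℝ => (d2 - a*α)*(R0 s)^6) := hInt6.const_mul _
    have i24 : Integrable (fun s:ℝ => (b + a*ω)*(R0 s)^2 + (d1 - a)*(R0 s)^4) := i2.add i4
    rw [← hfzero]
    simp only [hfdef]
    rw [integral_add i24 i6, integral_add i2 i4,
      integral_const_mul, integral_const_mul, integral_const_mul]
  rw [hId]
  linear_combination a*E1 - E2
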